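/- Let T be a contraction on a complex Hilbert space H, let E be a complex Hilbert space, and let Λ : H → ℓ²(ℕ, E) be a linear isometry satisfying Λ ∘ T* = S* ∘ Λ, where S is the unilateral shift on ℓ²(ℕ, E). Then there exists a unique linear isometry W from the closure of the range of D_T into E such that (Λ h)(n) = W(D_T T*ⁿ h) for all h ∈ H and all n ∈ ℕ. -/

import Mathlib

open ContinuousLinearMap
open scoped ENNReal

set_option linter.unusedSectionVars false

noncomputable section

section ShiftOperator

variable {E : Type*} [NormedAddCommGroup E] [InnerProductSpace ℂ E]

/-- The right-shifted sequence: `(shiftFun f) 0 = 0`, `(shiftFun f) (n+1) = f n`. -/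
def shiftFun (f : ℕ → E) : ℕ → E
  | 0 => 0
  | (n + 1) => f n

lemma summable_of_lp (f : lp (fun _ : ℕ => E) 2) :
    Summable fun n => ‖(f : ∀ _ : ℕ, E) n‖ ^ (2 : ℝ) := by
  have h := lp.memℓp f
  have h2 : (0 : ℝ) < (2 : ℝ≥0∞).toReal := by norm_num
  simpa using (memℓp_gen_iff h2).mp h

lemma summable_shiftFun (f : lp (fun _ : ℕ => E) 2) :
    Summable fun n => ‖shiftFun (f : ∀ _ : ℕ, E) n‖ ^ (2 : ℝ) := by
  have h1 : Summable fun n => ‖shiftFun (f : ∀ _ : ℕ, E) (n + 1)‖ ^ (2 : ℝ) := by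
    simpa [shiftFun] using summable_of_lp f
  exact (summable_nat_add_iff
    (f := fun n => ‖shiftFun ((f : ∀ _ : ℕ, E)) n‖ ^ (2 : ℝ)) 1).mp h1

lemma memℓp_shiftFun (f : lp (fun _ : ℕ => E) 2) : Memℓp (shiftFun (f : ∀ _ : ℕ, E)) 2 := by
  apply memℓp_gen
  simpa using summable_shiftFun f

lemma norm_shift_eq (f : lp (fun _ : ℕ => E) 2)
    (g : lp (fun _ : ℕ => E) 2) (hg : (g : ∀ _ : ℕ, E) = shiftFun (f : ∀ _ : ℕ, E)) :
    ‖g‖ = ‖f‖ := by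
  have h2 : (0 : ℝ) < (2 : ℝ≥0∞).toReal := by norm_num
  rw [lp.norm_eq_tsum_rpow h2 f, lp.norm_eq_tsum_rpow h2 g]
  congr 1
  have htsum : (∑' n, ‖shiftFun (f : ∀ _ : ℕ, E) n‖ ^ (2 : ℝ)) =
      ∑' n, ‖(f : ∀ _ : ℕ, E) n‖ ^ (2 : ℝ) := by
    rw [(summable_shiftFun f).tsum_eq_zero_add]
    simp [shiftFun]
  simp only [hg]
  simpa using htsum

/-- The unilateral shift `S` on `ℓ²(ℕ, E)`: `(S f)(0) = 0` and `(S f)(n) = f (n-1)` for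
`n ≥ 1`. -/
def shiftOp (E : Type*) [NormedAddCommGroup E] [InnerProductSpace ℂ E] :
    lp (fun _ : ℕ => E) 2 →L[ℂ] lp (fun _ : ℕ => E) 2 :=
  LinearMap.mkContinuous
    { toFun := fun f => ⟨shiftFun (f : ∀ _ : ℕ, E), memℓp_shiftFun f⟩
      map_add' := by
        intro f g
        apply lp.ext
        funext n
        cases n <;> simp [shiftFun, lp.coeFn_add, Pi.add_apply] <;> first | rfl | exact (add_zero (0 : E)).symm
      map_smul' := by
        intro c f
        apply lp.ext
        funext n
        cases n <;> simp [shiftFun, lp.coeFn_smul, Pi.smul_apply] }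
    1
    (by
      intro f
      rw [one_mul]
      exact le_of_eq (norm_shift_eq f _ rfl))

@[simp] lemma shiftOp_apply_zero (f : lp (fun _ : ℕ => E) 2) :
    (shiftOp E f : ∀ _ : ℕ, E) 0 = 0 := rfl

@[simp] lemma shiftOp_apply_succ (f : lp (fun _ : ℕ => E) 2) (n : ℕ) :
    (shiftOp E f : ∀ _ : ℕ, E) (n + 1) = (f : ∀ _ : ℕ, E) n := rfl

end ShiftOperator

section Defect

variable {H : Type*} [NormedAddCommGroup H] [InnerProductSpace ℂ H] [CompleteSpace H]

/-- The defect operator `D_T = (I - T T*)^{1/2}` of a contraction `T`. -/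
def defect (T : H →L[ℂ] H) : H →L[ℂ] H :=
  CFC.sqrt (1 - T * adjoint T)

end Defect

section DefectClosure

variable {H : Type*} [NormedAddCommGroup H] [InnerProductSpace ℂ H] [CompleteSpace H]

/-- The closure of the range of the defect operator of `T`. -/
def defectClos (T : H →L[ℂ] H) : Submodule ℂ H :=
  (LinearMap.range (defect T : H →ₗ[ℂ] H)).topologicalClosure

/-- `D_T x`, viewed as an element of the closure of the range of `D_T`. -/
def defectElem (T : H →L[ℂ] H) (x : H) : defectClos T :=
  ⟨defect T x, Submodule.le_topologicalClosure _ (LinearMap.mem_range_self _ x)⟩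

instance (T : H →L[ℂ] H) : CompleteSpace (defectClos T) :=
  IsClosed.completeSpace_coe (hs := Submodule.isClosed_topologicalClosure _)

end DefectClosure


section LShiftAux
variable {E : Type*} [NormedAddCommGroup E] [InnerProductSpace ℂ E]

lemma lshift_tsum_le (f : lp (fun _ : ℕ => E) 2) :
    (∑' n, ‖(f : ∀ _ : ℕ, E) (n + 1)‖ ^ (2:ℝ)) ≤ ∑' n, ‖(f : ∀ _ : ℕ, E) n‖ ^ (2:ℝ) := by
  refine Summable.tsum_le_tsum_of_inj (fun n => n + 1) (add_left_injective 1)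
    (fun _ _ => Real.rpow_nonneg (norm_nonneg _) _) (fun n => le_rfl)
    ((summable_of_lp f).comp_injective (add_left_injective 1)) (summable_of_lp f)

lemma memℓp_lshift (f : lp (fun _ : ℕ => E) 2) :
    Memℓp (fun n => (f : ∀ _ : ℕ, E) (n + 1)) 2 := by
  apply memℓp_gen
  have := (summable_nat_add_iff (f := fun n => ‖(f : ∀ _ : ℕ, E) n‖ ^ (2 : ℝ)) 1).mpr
    (summable_of_lp f)
  simpa using this

/-- The left shift (backward shift) on `ℓ²(ℕ, E)`. -/
def lshiftOp (E : Type*) [NormedAddCommGroup E] [InnerProductSpace ℂ E] :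
    lp (fun _ : ℕ => E) 2 →L[ℂ] lp (fun _ : ℕ => E) 2 :=
  LinearMap.mkContinuous
    { toFun := fun f => ⟨fun n => (f : ∀ _ : ℕ, E) (n + 1), memℓp_lshift f⟩
      map_add' := by intro f g; apply lp.ext; funext n; simp [lp.coeFn_add, Pi.add_apply]; rfl
      map_smul' := by intro c f; apply lp.ext; funext n; simp [lp.coeFn_smul, Pi.smul_apply] }
    1
    (by
      intro f
      rw [one_mul]
      have h2 : (0 : ℝ) < (2 : ℝ≥0∞).toReal := by norm_num
      refine lp.norm_le_of_tsum_le h2 (norm_nonneg f) ?_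
      have := lshift_tsum_le f
      rw [show (2:ℝ) = (2:ℝ≥0∞).toReal from by norm_num] at this
      rw [← lp.norm_rpow_eq_tsum h2 f] at this
      exact this)

@[simp] lemma lshiftOp_apply (f : lp (fun _ : ℕ => E) 2) (n : ℕ) :
    (lshiftOp E f : ∀ _ : ℕ, E) n = (f : ∀ _ : ℕ, E) (n + 1) := rfl

variable [CompleteSpace E]

lemma lshiftOp_eq_adjoint : lshiftOp E = adjoint (shiftOp E) := by
  rw [eq_adjoint_iff]
  intro f g
  rw [lp.inner_eq_tsum, lp.inner_eq_tsum]
  rw [(lp.summable_inner (𝕜 := ℂ) f (shiftOp E g)).tsum_eq_zero_add]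
  simp [inner_zero_right]

lemma adjoint_shiftOp_apply (f : lp (fun _ : ℕ => E) 2) (n : ℕ) :
    (adjoint (shiftOp E) f : ∀ _ : ℕ, E) n = (f : ∀ _ : ℕ, E) (n + 1) := by
  rw [← lshiftOp_eq_adjoint]; rfl

lemma rpow_two_eq_pow {a : ℝ} (ha : 0 ≤ a) : a ^ (2:ℝ) = a ^ 2 := by
  rw [show (2:ℝ) = ((2:ℕ):ℝ) from by norm_num, Real.rpow_natCast]

lemma norm_sq_decomp (f : lp (fun _ : ℕ => E) 2) :
    ‖f‖ ^ 2 = ‖(f : ∀ _ : ℕ, E) 0‖ ^ 2 + ‖lshiftOp E f‖ ^ 2 := by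
  have h2 : (0 : ℝ) < (2 : ℝ≥0∞).toReal := by norm_num
  have h2' : ((2:ℝ≥0∞)).toReal = (2:ℝ) := by norm_num
  have ha := lp.norm_rpow_eq_tsum h2 f
  have hb := lp.norm_rpow_eq_tsum h2 (lshiftOp E f)
  rw [h2'] at ha hb
  rw [rpow_two_eq_pow (norm_nonneg _)] at ha hb
  rw [ha, hb, (summable_of_lp f).tsum_eq_zero_add,
    rpow_two_eq_pow (norm_nonneg ((f : ∀ _ : ℕ, E) 0))]
  rfl

end LShiftAux

section DefectAux
variable {H : Type*} [NormedAddCommGroup H] [InnerProductSpace ℂ H] [CompleteSpace H]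

lemma reInner_eq (T : H →L[ℂ] H) (x : H) :
    RCLike.re (inner ℂ ((1 - T * adjoint T) x) x : ℂ) = ‖x‖ ^ 2 - ‖adjoint T x‖ ^ 2 := by
  have h1 := adjoint_inner_left (adjoint T) x ((adjoint T) x)
  rw [adjoint_adjoint] at h1
  simp only [sub_apply, ContinuousLinearMap.one_apply, inner_sub_left, map_sub, ContinuousLinearMap.mul_apply, h1]
  rw [inner_self_eq_norm_sq, inner_self_eq_norm_sq]

lemma isPositive_one_sub (T : H →L[ℂ] H) (hT : ‖T‖ ≤ 1) :
    (1 - T * adjoint T).IsPositive := by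
  constructor
  · rw [← ContinuousLinearMap.isSelfAdjoint_iff_isSymmetric]
    exact (IsSelfAdjoint.one _).sub (IsSelfAdjoint.mul_star_self T)
  · intro x
    rw [reApplyInnerSelf_apply, reInner_eq]
    have hx : ‖adjoint T x‖ ≤ ‖x‖ := by
      calc ‖adjoint T x‖ ≤ ‖adjoint T‖ * ‖x‖ := le_opNorm _ _
      _ ≤ 1 * ‖x‖ := by
          apply mul_le_mul_of_nonneg_right _ (norm_nonneg x)
          rw [LinearIsometryEquiv.norm_map adjoint T]; exact hT
      _ = ‖x‖ := one_mul _
    have := pow_le_pow_left₀ (norm_nonneg _) hx 2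
    linarith

lemma nonneg_one_sub (T : H →L[ℂ] H) (hT : ‖T‖ ≤ 1) :
    (0 : H →L[ℂ] H) ≤ 1 - T * adjoint T := by
  rw [nonneg_iff_isPositive]; exact isPositive_one_sub T hT

lemma defect_mul_self (T : H →L[ℂ] H) (hT : ‖T‖ ≤ 1) :
    defect T * defect T = 1 - T * adjoint T :=
  CFC.sqrt_mul_sqrt_self _ (nonneg_one_sub T hT)

lemma defect_isSelfAdjoint (T : H →L[ℂ] H) : IsSelfAdjoint (defect T) :=
  ((nonneg_iff_isPositive _).mp (CFC.sqrt_nonneg (a := 1 - T * adjoint T))).isSelfAdjoint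

lemma norm_defect_sq (T : H →L[ℂ] H) (hT : ‖T‖ ≤ 1) (x : H) :
    ‖defect T x‖ ^ 2 = ‖x‖ ^ 2 - ‖adjoint T x‖ ^ 2 := by
  have hadj : adjoint (defect T) = defect T := isSelfAdjoint_iff'.mp (defect_isSelfAdjoint T)
  have h1 := adjoint_inner_left (defect T) x (defect T x)
  rw [hadj] at h1
  have h2 : (inner ℂ (defect T x) (defect T x) : ℂ) = inner ℂ ((1 - T * adjoint T) x) x := by
    rw [← h1, ← ContinuousLinearMap.mul_apply, defect_mul_self T hT]
  have := congrArg (RCLike.re (K := ℂ)) h2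
  rw [inner_self_eq_norm_sq, reInner_eq] at this
  exact this

end DefectAux

section MainAux
variable {H : Type*} [NormedAddCommGroup H] [InnerProductSpace ℂ H] [CompleteSpace H]
variable {E : Type*} [NormedAddCommGroup E] [InnerProductSpace ℂ E] [CompleteSpace E]

/-- Evaluation at `0` on `ℓ²(ℕ, E)`. -/
def eval0 (E : Type*) [NormedAddCommGroup E] [InnerProductSpace ℂ E] :
    lp (fun _ : ℕ => E) 2 →L[ℂ] E :=
  LinearMap.mkContinuous
    { toFun := fun f => (f : ∀ _ : ℕ, E) 0
      map_add' := by intro f g; simp [lp.coeFn_add, Pi.add_apply]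
      map_smul' := by intro c f; simp [lp.coeFn_smul, Pi.smul_apply] }
    1
    (fun f => by rw [one_mul]; exact lp.norm_apply_le_norm two_ne_zero f 0)

variable (T : H →L[ℂ] H) (Λ : H →L[ℂ] lp (fun _ : ℕ => E) 2)

/-- `h ↦ (Λ h) 0`. -/
def Wzero : H →L[ℂ] E := eval0 E ∘L Λ

lemma Wzero_apply (h : H) : Wzero Λ h = (Λ h : ∀ _ : ℕ, E) 0 := rfl

lemma apply_eq_Wzero (hint : Λ ∘L adjoint T = adjoint (shiftOp E) ∘L Λ) (h : H) (n : ℕ) :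
    (Λ h : ∀ _ : ℕ, E) n = Wzero Λ (((adjoint T) ^ n) h) := by
  induction n generalizing h with
  | zero => simp [Wzero_apply]
  | succ n ih =>
    have h1 : Λ (adjoint T h) = adjoint (shiftOp E) (Λ h) := by
      have := congrArg (fun F => F h) hint
      simpa using this
    have h2 : (Λ h : ∀ _ : ℕ, E) (n + 1) = (Λ (adjoint T h) : ∀ _ : ℕ, E) n := by
      rw [h1, adjoint_shiftOp_apply]
    have h3 : ((adjoint T) ^ (n + 1)) h = ((adjoint T) ^ n) (adjoint T h) := by
      rw [pow_succ, ContinuousLinearMap.mul_apply]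
    rw [h2, ih, h3]

lemma norm_Wzero (hT : ‖T‖ ≤ 1) (hΛ : Isometry Λ)
    (hint : Λ ∘L adjoint T = adjoint (shiftOp E) ∘L Λ) (x : H) :
    ‖Wzero Λ x‖ = ‖defect T x‖ := by
  have hnorm : ∀ y : H, ‖Λ y‖ = ‖y‖ := fun y => hΛ.norm_map_of_map_zero (map_zero Λ) y
  have h1 : lshiftOp E (Λ x) = Λ (adjoint T x) := by
    rw [lshiftOp_eq_adjoint]
    have := congrArg (fun F => F x) hint
    simpa using this.symm
  have hdec := norm_sq_decomp (Λ x)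
  rw [hnorm x, h1, hnorm (adjoint T x)] at hdec
  have hd := norm_defect_sq T hT x
  have hsq : ‖Wzero Λ x‖ ^ 2 = ‖defect T x‖ ^ 2 := by
    rw [Wzero_apply]; linarith
  calc ‖Wzero Λ x‖ = √(‖Wzero Λ x‖ ^ 2) := (Real.sqrt_sq (norm_nonneg _)).symm
  _ = √(‖defect T x‖ ^ 2) := by rw [hsq]
  _ = ‖defect T x‖ := Real.sqrt_sq (norm_nonneg _)

lemma Wzero_eq_of_defect_eq (hT : ‖T‖ ≤ 1) (hΛ : Isometry Λ)
    (hint : Λ ∘L adjoint T = adjoint (shiftOp E) ∘L Λ) {a b : H}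
    (hab : defect T a = defect T b) : Wzero Λ a = Wzero Λ b := by
  have : ‖Wzero Λ a - Wzero Λ b‖ = 0 := by
    rw [← map_sub, norm_Wzero T Λ hT hΛ hint, map_sub, hab, sub_self, norm_zero]
  rw [← sub_eq_zero]
  exact norm_eq_zero.mp this

lemma defect_range_choose_spec (y : ↥(LinearMap.range (defect T : H →ₗ[ℂ] H))) :
    defect T y.2.choose = y := y.2.choose_spec

/-- The isometry `range (defect T) → E`, `D_T x ↦ (Λ x) 0`. -/
def Vmap (hT : ‖T‖ ≤ 1) (hΛ : Isometry Λ)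
    (hint : Λ ∘L adjoint T = adjoint (shiftOp E) ∘L Λ) :
    ↥(LinearMap.range (defect T : H →ₗ[ℂ] H)) →L[ℂ] E :=
  LinearMap.mkContinuous
    { toFun := fun y => Wzero Λ y.2.choose
      map_add' := by
        intro y z
        rw [← map_add]
        apply Wzero_eq_of_defect_eq T Λ hT hΛ hint
        rw [map_add, defect_range_choose_spec T y, defect_range_choose_spec T z, defect_range_choose_spec T (y + z)]
        rfl
      map_smul' := by
        intro c y
        simp only [RingHom.id_apply]
        rw [← map_smul]
        apply Wzero_eq_of_defect_eq T Λ hT hΛ hint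
        rw [map_smul, defect_range_choose_spec T y, defect_range_choose_spec T (c • y)]
        rfl }
    1
    (fun y => by
      rw [one_mul]
      simp only [LinearMap.coe_mk, AddHom.coe_mk]
      rw [norm_Wzero T Λ hT hΛ hint, defect_range_choose_spec T y]
      rfl)

lemma Vmap_apply (hT : ‖T‖ ≤ 1) (hΛ : Isometry Λ)
    (hint : Λ ∘L adjoint T = adjoint (shiftOp E) ∘L Λ) (x : H) :
    Vmap T Λ hT hΛ hint ⟨defect T x, LinearMap.mem_range_self _ x⟩ = Wzero Λ x := by
  apply Wzero_eq_of_defect_eq T Λ hT hΛ hint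
  exact (⟨defect T x, LinearMap.mem_range_self _ x⟩ :
    ↥(LinearMap.range (defect T : H →ₗ[ℂ] H))).2.choose_spec

lemma norm_Vmap (hT : ‖T‖ ≤ 1) (hΛ : Isometry Λ)
    (hint : Λ ∘L adjoint T = adjoint (shiftOp E) ∘L Λ)
    (y : ↥(LinearMap.range (defect T : H →ₗ[ℂ] H))) :
    ‖Vmap T Λ hT hΛ hint y‖ = ‖y‖ := by
  show ‖Wzero Λ y.2.choose‖ = ‖y‖
  rw [norm_Wzero T Λ hT hΛ hint, defect_range_choose_spec T y]
  rfl

/-- The inclusion of `range (defect T)` into its closure, as a continuous linear map. -/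
def inclCLM : ↥(LinearMap.range (defect T : H →ₗ[ℂ] H)) →L[ℂ] ↥(defectClos T) :=
  LinearMap.mkContinuous
    (Submodule.inclusion (Submodule.le_topologicalClosure _))
    1
    (fun y => by rw [one_mul]; rfl)

lemma isometry_inclCLM : Isometry (inclCLM T) :=
  AddMonoidHomClass.isometry_of_norm _ (fun _ => rfl)

lemma denseRange_inclCLM : DenseRange (inclCLM T) := by
  refine Topology.IsInducing.subtypeVal.dense_iff.2 fun x => ?_
  have hx : (x : H) ∈ closure ((LinearMap.range (defect T : H →ₗ[ℂ] H) : Set H)) := x.prop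
  convert hx
  rw [← Set.range_comp]
  exact Set.ext fun y =>
    ⟨by rintro ⟨y, rfl⟩; exact y.prop, fun hy => ⟨⟨y, hy⟩, rfl⟩⟩

end MainAux
/-- Canonical factorization of isometric dilations: if `Λ : H → ℓ²(ℕ, E)` is a linear
isometry with `Λ ∘ T* = S* ∘ Λ` for a contraction `T`, then there is a unique linear
isometry `W` from the closure of the range of `D_T` into `E` such that
`(Λ h)(n) = W (D_T T*ⁿ h)` for all `h` and `n`. -/
theorem factorization_of_isometric_dilations
    {H : Type*} [NormedAddCommGroup H] [InnerProductSpace ℂ H] [CompleteSpace H]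
    {E : Type*} [NormedAddCommGroup E] [InnerProductSpace ℂ E] [CompleteSpace E]
    (T : H →L[ℂ] H) (hT : ‖T‖ ≤ 1)
    (Λ : H →L[ℂ] lp (fun _ : ℕ => E) 2) (hΛ : Isometry Λ)
    (hint : Λ ∘L adjoint T = adjoint (shiftOp E) ∘L Λ) :
    ∃! W : ↥(defectClos T) →L[ℂ] E,
      Isometry W ∧
      ∀ (h : H) (n : ℕ), (Λ h : ∀ _ : ℕ, E) n = W (defectElem T (((adjoint T) ^ n) h)) := by
  classical
  have hdense := denseRange_inclCLM T
  have huind : IsUniformInducing (inclCLM T) := (isometry_inclCLM T).isUniformInducing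
  set V := Vmap T Λ hT hΛ hint with hV
  set W := V.extend (inclCLM T) with hW
  have hWe : ∀ x : H, W (defectElem T x) = Wzero Λ x := by
    intro x
    have h1 : defectElem T x = inclCLM T ⟨defect T x, LinearMap.mem_range_self _ x⟩ :=
      Subtype.ext rfl
    rw [h1]
    exact (ContinuousLinearMap.extend_eq V hdense huind _).trans
      (Vmap_apply T Λ hT hΛ hint x)
  have hWnorm : ∀ z, ‖W z‖ = ‖z‖ := by
    intro z
    refine hdense.induction_on z
      (isClosed_eq (continuous_norm.comp W.continuous) continuous_norm) ?_
    intro y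
    rw [show W (inclCLM T y) = V y from ContinuousLinearMap.extend_eq V hdense huind y,
      norm_Vmap T Λ hT hΛ hint y]
    rfl
  refine ⟨W, ⟨AddMonoidHomClass.isometry_of_norm _ hWnorm, ?_⟩, ?_⟩
  · intro h n
    rw [apply_eq_Wzero T Λ hint h n, hWe]
  · rintro W' ⟨hiso', hprop'⟩
    have key : ∀ y, W' (inclCLM T y) = W (inclCLM T y) := by
      intro y
      obtain ⟨x, hx⟩ := y.2
      have h1 : inclCLM T y = defectElem T x := Subtype.ext hx.symm
      rw [h1, hWe]
      have h2 := hprop' x 0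
      simp only [pow_zero, ContinuousLinearMap.one_apply] at h2
      rw [← h2, Wzero_apply]
    have hall : ∀ z, W' z = W z := fun z =>
      hdense.induction_on z (isClosed_eq W'.continuous W.continuous) key
    exact ContinuousLinearMap.ext hall
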